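/- Let p_1 and p_2 be real polynomials of degree at most N, and let a_1, a_2 be positive integers. Then the number of integers k for which there exists t_k ∈ ℝ with C^{-1} 2^{a_1 k} ≤ |p_1(t_k)| ≤ C 2^{a_1 k} and C^{-1} 2^{-a_2 k} ≤ |p_2(t_k)| ≤ C 2^{-a_2 k} is bounded by a constant depending only on N and C. -/

import Mathlib

open Polynomial

noncomputable def rootsRe (P : Polynomial ℝ) : Finset ℝ :=
  ((P.map (algebraMap ℝ ℂ)).roots.toFinset).image Complex.re

lemma rootsRe_card (P : Polynomial ℝ) : (rootsRe P).card ≤ P.natDegree := by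
  calc (rootsRe P).card ≤ (P.map (algebraMap ℝ ℂ)).roots.toFinset.card :=
        Finset.card_image_le
    _ ≤ Multiset.card (P.map (algebraMap ℝ ℂ)).roots := Multiset.toFinset_card_le _
    _ ≤ (P.map (algebraMap ℝ ℂ)).natDegree := Polynomial.card_roots' _
    _ ≤ P.natDegree := Polynomial.natDegree_map_le

lemma rootNear (P : Polynomial ℝ) (N : ℕ) (hd : P.natDegree ≤ N) (x y : ℝ)
    (h : 2 ^ N * |P.eval x| < |P.eval y|) :
    ∃ α ∈ rootsRe P, |x - α| ≤ |y - x| := by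
  by_contra hcon
  push_neg at hcon
  set Q := P.map (algebraMap ℝ ℂ) with hQdef
  have heval : ∀ r : ℝ, ‖Q.eval (r : ℂ)‖ = |P.eval r| := by
    intro r
    have : Q.eval ((algebraMap ℝ ℂ) r) = (algebraMap ℝ ℂ) (P.eval r) := by
      rw [hQdef, Polynomial.eval_map, Polynomial.eval₂_at_apply]
    have h2 : Q.eval (r : ℂ) = ((P.eval r : ℝ) : ℂ) := this
    rw [h2, Complex.norm_real, Real.norm_eq_abs]
  have hsplits : Q.Splits := IsAlgClosed.splits Q
  have hfact : Q = C Q.leadingCoeff * (Q.roots.map fun a => X - C a).prod :=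
    hsplits.eq_prod_roots
  have evalAbs : ∀ w : ℂ, ‖Q.eval w‖
      = ‖Q.leadingCoeff‖ * (Q.roots.map (fun z => ‖w - z‖)).prod := by
    intro w
    conv_lhs => rw [hfact]
    rw [Polynomial.eval_mul, Polynomial.eval_C, norm_mul, Polynomial.eval_multiset_prod,
      Multiset.map_map]
    congr 1
    have hnm := map_multiset_prod (normHom (α := ℂ))
      (Multiset.map ((fun p => Polynomial.eval w p) ∘ fun a => X - C a) Q.roots)
    refine hnm.trans ?_
    congr 1
    rw [Multiset.map_map]
    apply Multiset.map_congr rfl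
    intro z _
    show ‖Polynomial.eval w (X - C z)‖ = ‖w - z‖
    simp
  have hfar : ∀ z ∈ Q.roots, |y - x| ≤ ‖(x : ℂ) - z‖ := by
    intro z hz
    have hre : z.re ∈ rootsRe P := by
      exact Finset.mem_image_of_mem _ (Multiset.mem_toFinset.mpr hz)
    have h1 := hcon z.re hre
    have h2 : |x - z.re| ≤ ‖(x : ℂ) - z‖ := by
      have : ((x : ℂ) - z).re = x - z.re := by simp
      calc |x - z.re| = |((x : ℂ) - z).re| := by rw [this]
        _ ≤ ‖(x : ℂ) - z‖ := Complex.abs_re_le_norm _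
    linarith
  have hterm : ∀ z ∈ Q.roots,
      ‖(y : ℂ) - z‖ ≤ 2 * ‖(x : ℂ) - z‖ := by
    intro z hz
    have : (y : ℂ) - z = ((y : ℂ) - (x : ℂ)) + ((x : ℂ) - z) := by ring
    calc ‖(y : ℂ) - z‖
        ≤ ‖(y : ℂ) - (x : ℂ)‖ + ‖(x : ℂ) - z‖ := by
          rw [this]; exact norm_add_le _ _
      _ = |y - x| + ‖(x : ℂ) - z‖ := by
          rw [← Complex.ofReal_sub, Complex.norm_real, Real.norm_eq_abs]
      _ ≤ ‖(x : ℂ) - z‖ + ‖(x : ℂ) - z‖ := by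
          have := hfar z hz; linarith
      _ = 2 * ‖(x : ℂ) - z‖ := by ring
  have hprod : (Q.roots.map (fun z => ‖(y : ℂ) - z‖)).prod
      ≤ (Q.roots.map (fun z => 2 * ‖(x : ℂ) - z‖)).prod := by
    apply Multiset.prod_map_le_prod_map₀
    · intro i hi; exact norm_nonneg _
    · exact hterm
  have hsplit2 : (Q.roots.map (fun z => 2 * ‖(x : ℂ) - z‖)).prod
      = 2 ^ (Multiset.card Q.roots) * (Q.roots.map (fun z => ‖(x : ℂ) - z‖)).prod := by
    rw [show (fun z => 2 * ‖(x : ℂ) - z‖)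
        = (fun z => (fun _ => (2:ℝ)) z * (fun w => ‖(x : ℂ) - w‖) z) from rfl,
      Multiset.prod_map_mul]
    congr 1
    rw [Multiset.map_const', Multiset.prod_replicate]
  have hcard : 2 ^ (Multiset.card Q.roots) ≤ (2:ℝ) ^ N := by
    apply pow_le_pow_right₀ (by norm_num)
    calc Multiset.card Q.roots ≤ Q.natDegree := Polynomial.card_roots' _
      _ ≤ P.natDegree := Polynomial.natDegree_map_le
      _ ≤ N := hd
  have hA : (0:ℝ) ≤ ‖Q.leadingCoeff‖ := norm_nonneg _
  have hPx : (0:ℝ) ≤ (Q.roots.map (fun z => ‖(x : ℂ) - z‖)).prod :=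
    Multiset.prod_nonneg (by
      intro a ha
      obtain ⟨z, hz, rfl⟩ := Multiset.mem_map.mp ha
      exact norm_nonneg _)
  have hfin : |P.eval y| ≤ 2 ^ N * |P.eval x| := by
    rw [← heval y, ← heval x, evalAbs, evalAbs]
    calc ‖Q.leadingCoeff‖ * (Q.roots.map (fun z => ‖(y : ℂ) - z‖)).prod
        ≤ ‖Q.leadingCoeff‖ * (2 ^ (Multiset.card Q.roots)
            * (Q.roots.map (fun z => ‖(x : ℂ) - z‖)).prod) := by
          apply mul_le_mul_of_nonneg_left _ hA
          rw [← hsplit2]; exact hprod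
      _ ≤ ‖Q.leadingCoeff‖ * (2 ^ N
            * (Q.roots.map (fun z => ‖(x : ℂ) - z‖)).prod) := by
          apply mul_le_mul_of_nonneg_left _ hA
          exact mul_le_mul_of_nonneg_right hcard hPx
      _ = 2 ^ N * (‖Q.leadingCoeff‖
            * (Q.roots.map (fun z => ‖(x : ℂ) - z‖)).prod) := by ring
  linarith

lemma card_le_two_of_succ {t : Finset ℕ} (h : ∀ i ∈ t, ∀ j ∈ t, i < j → j = i + 1) :
    t.card ≤ 2 := by
  rcases t.eq_empty_or_nonempty with rfl | hne
  · simp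
  · have hsub : t ⊆ {t.min' hne, t.min' hne + 1} := by
      intro j hj
      rcases lt_or_eq_of_le (t.min'_le j hj) with hlt | heq
      · have := h _ (t.min'_mem hne) _ hj hlt
        simp [this]
      · simp [← heq]
    calc t.card ≤ ({t.min' hne, t.min' hne + 1} : Finset ℕ).card := Finset.card_le_card hsub
      _ ≤ 2 := Finset.card_insert_le _ _ |>.trans (by simp)

lemma card_le_one_of_none {t : Finset ℕ} (h : ∀ i ∈ t, ∀ j ∈ t, i < j → False) :
    t.card ≤ 1 := by
  apply Finset.card_le_one.mpr
  intro a ha b hb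
  rcases lt_trichotomy a b with hl | he | hg
  · exact (h a ha b hb hl).elim
  · exact he
  · exact (h b hb a ha hg).elim

lemma count_gaps (m : ℕ) (u : ℕ → ℝ) (hu : ∀ i j, i < j → j < m → u i < u j)
    (R : Finset ℝ)
    (hyp : ∀ i, i + 1 < m → ∃ α ∈ R, ∃ β ∈ R,
      |u i - α| ≤ u (i+1) - u i ∧ |u (i+1) - β| ≤ u (i+1) - u i) :
    m ≤ 5 * (R.card * R.card) + 1 := by
  classical
  have hA : ∀ i, i + 1 < m → ℝ × ℝ := fun i h => ((hyp i h).choose, (hyp i h).choose_spec.2.choose)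
  set F : ℕ → ℝ × ℝ := fun i =>
    if h : i + 1 < m then ((hyp i h).choose, (hyp i h).choose_spec.2.choose) else (0, 0) with hF
  have hFspec : ∀ i, (h : i + 1 < m) → (F i).1 ∈ R ∧ (F i).2 ∈ R ∧
      |u i - (F i).1| ≤ u (i+1) - u i ∧ |u (i+1) - (F i).2| ≤ u (i+1) - u i := by
    intro i h
    have h1 := (hyp i h).choose_spec
    have h2 := h1.2.choose_spec
    simp only [hF, dif_pos h]
    exact ⟨h1.1, h2.1, h2.2⟩
  set s : Finset ℕ := Finset.range (m - 1) with hs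
  have hmem : ∀ i ∈ s, i + 1 < m := by
    intro i hi
    have := Finset.mem_range.mp hi
    omega
  have himg : s.image F ⊆ R ×ˢ R := by
    intro p hp
    obtain ⟨i, hi, rfl⟩ := Finset.mem_image.mp hp
    have := hFspec i (hmem i hi)
    exact Finset.mem_product.mpr ⟨this.1, this.2.1⟩
  have hcard : s.card ≤ 5 * (s.image F).card := by
    apply Finset.card_le_mul_card_image
    intro b hb
    -- fiber bound
    set fib : Finset ℕ := {a ∈ s | F a = b} with hfib
    have hfibmem : ∀ i ∈ fib, i + 1 < m ∧ |u i - b.1| ≤ u (i+1) - u i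
        ∧ |u (i+1) - b.2| ≤ u (i+1) - u i := by
      intro i hi
      have hi' := Finset.mem_filter.mp hi
      have h1 := hFspec i (hmem i hi'.1)
      rw [hi'.2] at h1
      exact ⟨hmem i hi'.1, h1.2.2.1, h1.2.2.2⟩
    set t1 : Finset ℕ := {i ∈ fib | u i ≤ b.1} with ht1
    set t2 : Finset ℕ := {i ∈ fib | ¬ u i ≤ b.1 ∧ b.2 ≤ u (i+1)} with ht2
    set t3 : Finset ℕ := {i ∈ fib | ¬ u i ≤ b.1 ∧ ¬ b.2 ≤ u (i+1)} with ht3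
    have hcover : fib ⊆ t1 ∪ t2 ∪ t3 := by
      intro i hi
      simp only [ht1, ht2, ht3, Finset.mem_union, Finset.mem_filter]
      by_cases h1 : u i ≤ b.1
      · exact Or.inl (Or.inl ⟨hi, h1⟩)
      · by_cases h2 : b.2 ≤ u (i+1)
        · exact Or.inl (Or.inr ⟨hi, h1, h2⟩)
        · exact Or.inr ⟨hi, h1, h2⟩
    have hb1 : t1.card ≤ 2 := by
      apply card_le_two_of_succ
      intro i hi j hj hij
      have hifib := Finset.mem_filter.mp hi
      have hjfib := Finset.mem_filter.mp hj
      obtain ⟨him, hiprop, -⟩ := hfibmem i hifib.1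
      obtain ⟨hjm, -, -⟩ := hfibmem j hjfib.1
      -- u (i+1) ≥ b.1, u j ≤ b.1
      have h1 : b.1 ≤ u (i + 1) := by
        have := abs_le.mp hiprop
        linarith [this.2, neg_abs_le (u i - b.1), this.1]
      by_contra hne
      have hlt : i + 1 < j := by omega
      have : u (i+1) < u j := hu _ _ hlt (by omega)
      have : u j ≤ b.1 := hjfib.2
      linarith
    have hb2 : t2.card ≤ 2 := by
      apply card_le_two_of_succ
      intro i hi j hj hij
      have hifib := Finset.mem_filter.mp hi
      have hjfib := Finset.mem_filter.mp hj
      obtain ⟨him, -, -⟩ := hfibmem i hifib.1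
      obtain ⟨hjm, -, hjprop⟩ := hfibmem j hjfib.1
      -- u j ≤ b.2 from j's prop, b.2 ≤ u (i+1)
      have h1 : u j ≤ b.2 := by
        have := abs_le.mp hjprop
        linarith [this.1]
      by_contra hne
      have hlt : i + 1 < j := by omega
      have : u (i+1) < u j := hu _ _ hlt (by omega)
      have : b.2 ≤ u (i+1) := hifib.2.2
      linarith
    have hb3 : t3.card ≤ 1 := by
      apply card_le_one_of_none
      intro i hi j hj hij
      have hifib := Finset.mem_filter.mp hi
      have hjfib := Finset.mem_filter.mp hj
      obtain ⟨him, hi1, hi2⟩ := hfibmem i hifib.1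
      obtain ⟨hjm, hj1, hj2⟩ := hfibmem j hjfib.1
      have hia : b.1 < u i := lt_of_not_ge hifib.2.1
      have hja : ¬ b.2 ≤ u (j+1) := hjfib.2.2
      have hib : u (i+1) < b.2 := lt_of_not_ge hifib.2.2
      have hjb : b.2 ≤ u j + (u (j+1) - u j) + 0 → True := fun _ => trivial
      -- u (i+1) ≤ u j
      have huij : u (i+1) ≤ u j := by
        rcases eq_or_lt_of_le (Nat.succ_le_of_lt hij) with heq | hlt
        · exact le_of_eq (by rw [show i + 1 = j from heq])
        · exact le_of_lt (hu _ _ hlt (by omega))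
      -- Δ_j ≥ u j - b.1 > Δ_i
      have hd1 : u i - b.1 ≤ u (i+1) - u i := le_trans (le_abs_self _) hi1
      have hd2 : b.2 - u (i+1) ≤ u (i+1) - u i := by
        have := neg_abs_le (u (i+1) - b.2); linarith [hi2]
      have hd3 : u j - b.1 ≤ u (j+1) - u j := le_trans (le_abs_self _) hj1
      have hd4 : b.2 - u (j+1) ≤ u (j+1) - u j := by
        have := neg_abs_le (u (j+1) - b.2); linarith [hj2]
      have hjb2 : u (j+1) < b.2 := lt_of_not_ge hja
      -- Δ_j > Δ_i and Δ_i > Δ_j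
      have c1 : u (i+1) - u i < u (j+1) - u j := by
        -- Δ_j ≥ u j - b.1 ≥ u(i+1) - b.1 = Δ_i + (u i - b.1) > Δ_i
        have : u (i+1) - b.1 ≤ u j - b.1 := by linarith
        linarith
      have c2 : u (j+1) - u j < u (i+1) - u i := by
        -- Δ_i ≥ b.2 - u (i+1) ≥ b.2 - u j = Δ_j + (b.2 - u (j+1)) > Δ_j
        have : b.2 - u j ≤ b.2 - u (i+1) := by linarith
        linarith
      linarith
    calc fib.card ≤ (t1 ∪ t2 ∪ t3).card := Finset.card_le_card hcover
      _ ≤ (t1 ∪ t2).card + t3.card := Finset.card_union_le _ _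
      _ ≤ t1.card + t2.card + t3.card := by
          have := Finset.card_union_le t1 t2; omega
      _ ≤ 5 := by omega
  have : s.card = m - 1 := by simp [hs]
  have himgcard : (s.image F).card ≤ R.card * R.card := by
    calc (s.image F).card ≤ (R ×ˢ R).card := Finset.card_le_card himg
      _ = R.card * R.card := Finset.card_product _ _
  have : m - 1 ≤ 5 * (R.card * R.card) := by
    calc m - 1 = s.card := this.symm
      _ ≤ 5 * (s.image F).card := hcard
      _ ≤ 5 * (R.card * R.card) := by omega
  omega

lemma ratio_helper (C : ℝ) (hC : 1 ≤ C) (N g : ℕ) (hg : (2:ℝ)^N * C^2 < 2^g)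
    (e e' : ℤ) (he : e + g ≤ e') (v v' : ℝ)
    (hv : v ≤ C * (2:ℝ)^e) (hv' : C⁻¹ * (2:ℝ)^e' ≤ v') : 2^N * v < v' := by
  have hC0 : (0:ℝ) < C := lt_of_lt_of_le one_pos hC
  have hz : (0:ℝ) < (2:ℝ)^e := zpow_pos (by norm_num) _
  have hzg : ((2:ℝ)^(g:ℕ) : ℝ) = (2:ℝ)^((g:ℕ):ℤ) := (zpow_natCast 2 g).symm
  have hup : (2:ℝ)^e * (2:ℝ)^(g:ℕ) ≤ (2:ℝ)^e' := by
    rw [hzg, ← zpow_add₀ (by norm_num : (2:ℝ) ≠ 0)]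
    exact zpow_le_zpow_right₀ (by norm_num) he
  have hkey : (2:ℝ)^N * C < C⁻¹ * (2:ℝ)^(g:ℕ) := by
    rw [inv_mul_eq_div, lt_div_iff₀ hC0]
    calc (2:ℝ)^N * C * C = 2^N * C^2 := by ring
      _ < 2^g := hg
  have h1 : (2:ℝ)^N * v ≤ (2:ℝ)^N * C * (2:ℝ)^e := by
    have h2 : (0:ℝ) ≤ (2:ℝ)^N := by positivity
    calc (2:ℝ)^N * v ≤ (2:ℝ)^N * (C * (2:ℝ)^e) := mul_le_mul_of_nonneg_left hv h2
      _ = (2:ℝ)^N * C * (2:ℝ)^e := by ring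
  have h2 : (2:ℝ)^N * C * (2:ℝ)^e < (C⁻¹ * (2:ℝ)^(g:ℕ)) * (2:ℝ)^e :=
    mul_lt_mul_of_pos_right hkey hz
  have h3 : (C⁻¹ * (2:ℝ)^(g:ℕ)) * (2:ℝ)^e ≤ C⁻¹ * (2:ℝ)^e' := by
    have hC0' : (0:ℝ) ≤ C⁻¹ := by positivity
    calc (C⁻¹ * (2:ℝ)^(g:ℕ)) * (2:ℝ)^e = C⁻¹ * ((2:ℝ)^e * (2:ℝ)^(g:ℕ)) := by ring
      _ ≤ C⁻¹ * (2:ℝ)^e' := mul_le_mul_of_nonneg_left hup hC0'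
  linarith

lemma sep_bound (N : ℕ) (C : ℝ) (hC : 1 ≤ C) (p₁ p₂ : Polynomial ℝ)
    (h₁ : p₁.natDegree ≤ N) (h₂ : p₂.natDegree ≤ N) (a₁ a₂ : ℕ) (ha₁ : 0 < a₁) (ha₂ : 0 < a₂)
    (g : ℕ) (hg : (2:ℝ)^N * C^2 < 2^g)
    (G : Finset ℤ)
    (hW : ∀ k ∈ G, ∃ t : ℝ,
      C⁻¹ * (2:ℝ)^((a₁:ℤ)*k) ≤ |p₁.eval t| ∧ |p₁.eval t| ≤ C * (2:ℝ)^((a₁:ℤ)*k) ∧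
      C⁻¹ * (2:ℝ)^(-(a₂:ℤ)*k) ≤ |p₂.eval t| ∧ |p₂.eval t| ≤ C * (2:ℝ)^(-(a₂:ℤ)*k))
    (hsep : ∀ k ∈ G, ∀ k' ∈ G, k < k' → k + g ≤ k') :
    G.card ≤ 5 * ((2*N) * (2*N)) + 1 := by
  classical
  set w : ℤ → ℝ := fun k => if h : ∃ t : ℝ,
      C⁻¹ * (2:ℝ)^((a₁:ℤ)*k) ≤ |p₁.eval t| ∧ |p₁.eval t| ≤ C * (2:ℝ)^((a₁:ℤ)*k) ∧
      C⁻¹ * (2:ℝ)^(-(a₂:ℤ)*k) ≤ |p₂.eval t| ∧ |p₂.eval t| ≤ C * (2:ℝ)^(-(a₂:ℤ)*k)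
    then h.choose else 0 with hwdef
  have hwspec : ∀ k ∈ G,
      C⁻¹ * (2:ℝ)^((a₁:ℤ)*k) ≤ |p₁.eval (w k)| ∧ |p₁.eval (w k)| ≤ C * (2:ℝ)^((a₁:ℤ)*k) ∧
      C⁻¹ * (2:ℝ)^(-(a₂:ℤ)*k) ≤ |p₂.eval (w k)| ∧ |p₂.eval (w k)| ≤ C * (2:ℝ)^(-(a₂:ℤ)*k) := by
    intro k hk
    have hex := hW k hk
    simp only [hwdef, dif_pos hex]
    exact hex.choose_spec
  have hrat1 : ∀ k ∈ G, ∀ k' ∈ G, k < k' →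
      2^N * |p₁.eval (w k)| < |p₁.eval (w k')| := by
    intro k hk k' hk' hlt
    have hs1 := hwspec k hk
    have hs2 := hwspec k' hk'
    apply ratio_helper C hC N g hg ((a₁:ℤ)*k) ((a₁:ℤ)*k') _ _ _ hs1.2.1 hs2.1
    have hsep' := hsep k hk k' hk' hlt
    have h1 : (1:ℤ) ≤ (a₁:ℤ) := by exact_mod_cast ha₁
    nlinarith [hsep']
  have hrat2 : ∀ k ∈ G, ∀ k' ∈ G, k < k' →
      2^N * |p₂.eval (w k')| < |p₂.eval (w k)| := by
    intro k hk k' hk' hlt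
    have hs1 := hwspec k hk
    have hs2 := hwspec k' hk'
    apply ratio_helper C hC N g hg (-(a₂:ℤ)*k') (-(a₂:ℤ)*k) _ _ _ hs2.2.2.2 hs1.2.2.1
    have hsep' := hsep k hk k' hk' hlt
    have h1 : (1:ℤ) ≤ (a₂:ℤ) := by exact_mod_cast ha₂
    nlinarith [hsep']
  have hinj : Set.InjOn w ↑G := by
    intro k hk k' hk' heq
    by_contra hne
    rcases lt_or_gt_of_ne hne with hlt | hgt
    · have := hrat1 k hk k' hk' hlt
      rw [heq] at this
      have h2 : (1:ℝ) ≤ 2^N := one_le_pow₀ (by norm_num)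
      nlinarith [abs_nonneg (p₁.eval (w k'))]
    · have := hrat1 k' hk' k hk hgt
      rw [heq] at this
      have h2 : (1:ℝ) ≤ 2^N := one_le_pow₀ (by norm_num)
      nlinarith [abs_nonneg (p₁.eval (w k'))]
  set m : ℕ := G.card with hm
  set T : Finset ℝ := G.image w with hT
  have hTcard : T.card = m := Finset.card_image_of_injOn hinj
  set iso := T.orderIsoOfFin hTcard with hiso
  set u : ℕ → ℝ := fun i => if h : i < m then (iso ⟨i, h⟩ : ℝ) else 0 with hu
  have humono : ∀ i j, i < j → j < m → u i < u j := by
    intro i j hij hjm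
    have him : i < m := lt_trans hij hjm
    simp only [hu, dif_pos him, dif_pos hjm]
    have : (⟨i, him⟩ : Fin m) < ⟨j, hjm⟩ := hij
    exact Subtype.coe_lt_coe.mpr ((OrderIso.lt_iff_lt iso).mpr this)
  have humem : ∀ i (h : i < m), u i ∈ T := by
    intro i h
    simp only [hu, dif_pos h]
    exact (iso ⟨i, h⟩).2
  set R : Finset ℝ := rootsRe p₁ ∪ rootsRe p₂ with hR
  have hyp : ∀ i, i + 1 < m → ∃ α ∈ R, ∃ β ∈ R,
      |u i - α| ≤ u (i+1) - u i ∧ |u (i+1) - β| ≤ u (i+1) - u i := by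
    intro i hi1
    have him : i < m := by omega
    have hxy : u i < u (i+1) := humono i (i+1) (by omega) hi1
    obtain ⟨kx, hkx, hwx⟩ := Finset.mem_image.mp (humem i him)
    obtain ⟨ky, hky, hwy⟩ := Finset.mem_image.mp (humem (i+1) hi1)
    have hkne : kx ≠ ky := by
      intro hcontra
      rw [hcontra, hwy] at hwx
      exact absurd hwx (ne_of_gt hxy)
    have habs1 : |u (i+1) - u i| = u (i+1) - u i := abs_of_pos (by linarith)
    have habs2 : |u i - u (i+1)| = u (i+1) - u i := by rw [abs_sub_comm]; exact habs1
    rcases lt_or_gt_of_ne hkne with hlt | hgt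
    · -- kx < ky : p₁ grows from x to y, p₂ shrinks
      have hr1 := hrat1 kx hkx ky hky hlt
      rw [hwx, hwy] at hr1
      have hr2 := hrat2 kx hkx ky hky hlt
      rw [hwx, hwy] at hr2
      obtain ⟨α, hα, hαle⟩ := rootNear p₁ N h₁ (u i) (u (i+1)) hr1
      obtain ⟨β, hβ, hβle⟩ := rootNear p₂ N h₂ (u (i+1)) (u i) hr2
      refine ⟨α, Finset.mem_union_left _ hα, β, Finset.mem_union_right _ hβ, ?_, ?_⟩
      · rw [habs1] at hαle; exact hαle
      · rw [habs2] at hβle; exact hβle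
    · -- ky < kx
      have hr1 := hrat1 ky hky kx hkx hgt
      rw [hwx, hwy] at hr1
      have hr2 := hrat2 ky hky kx hkx hgt
      rw [hwx, hwy] at hr2
      obtain ⟨β, hβ, hβle⟩ := rootNear p₁ N h₁ (u (i+1)) (u i) hr1
      obtain ⟨α, hα, hαle⟩ := rootNear p₂ N h₂ (u i) (u (i+1)) hr2
      refine ⟨α, Finset.mem_union_right _ hα, β, Finset.mem_union_left _ hβ, ?_, ?_⟩
      · rw [habs1] at hαle; exact hαle
      · rw [habs2] at hβle; exact hβle
  have hcount := count_gaps m u humono R hyp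
  have hRcard : R.card ≤ 2 * N := by
    calc R.card ≤ (rootsRe p₁).card + (rootsRe p₂).card := Finset.card_union_le _ _
      _ ≤ N + N := Nat.add_le_add ((rootsRe_card p₁).trans h₁) ((rootsRe_card p₂).trans h₂)
      _ = 2 * N := by ring
  have : R.card * R.card ≤ (2*N) * (2*N) := Nat.mul_le_mul hRcard hRcard
  omega

lemma extract_bound (N : ℕ) (C : ℝ) (hC : 1 ≤ C) (p₁ p₂ : Polynomial ℝ)
    (h₁ : p₁.natDegree ≤ N) (h₂ : p₂.natDegree ≤ N) (a₁ a₂ : ℕ) (ha₁ : 0 < a₁) (ha₂ : 0 < a₂)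
    (F : Finset ℤ)
    (hW : ∀ k ∈ F, ∃ t : ℝ,
      C⁻¹ * (2:ℝ)^((a₁:ℤ)*k) ≤ |p₁.eval t| ∧ |p₁.eval t| ≤ C * (2:ℝ)^((a₁:ℤ)*k) ∧
      C⁻¹ * (2:ℝ)^(-(a₂:ℤ)*k) ≤ |p₂.eval t| ∧ |p₂.eval t| ≤ C * (2:ℝ)^(-(a₂:ℤ)*k)) :
    F.card ≤ (N + 2*(⌈Real.logb 2 C⌉₊) + 1) * (2 * (5*((2*N)*(2*N)) + 1)) := by
  classical
  set c' : ℕ := ⌈Real.logb 2 C⌉₊ with hc'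
  set g : ℕ := N + 2*c' + 1 with hgdef
  have hC0 : (0:ℝ) < C := lt_of_lt_of_le one_pos hC
  have hg : (2:ℝ)^N * C^2 < 2^g := by
    have hClog : C ≤ 2^(c' : ℕ) := by
      have h1 : C = (2:ℝ) ^ (Real.logb 2 C) := (Real.rpow_logb (by norm_num) (by norm_num) hC0).symm
      have h2 : (2:ℝ) ^ (Real.logb 2 C) ≤ (2:ℝ) ^ ((c' : ℕ) : ℝ) :=
        Real.rpow_le_rpow_of_exponent_le (by norm_num) (Nat.le_ceil _)
      have h3 : (2:ℝ) ^ ((c' : ℕ) : ℝ) = (2:ℝ)^(c' : ℕ) := Real.rpow_natCast 2 c'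
      linarith [h1 ▸ le_of_eq h1, h2, h3 ▸ h2]
    have hCsq : C^2 ≤ ((2:ℝ)^(c':ℕ))^2 := by nlinarith
    have : (2:ℝ)^N * C^2 ≤ (2:ℝ)^N * ((2:ℝ)^(c':ℕ))^2 := by nlinarith [pow_pos (show (0:ℝ)<2 by norm_num) N]
    have heq : (2:ℝ)^N * ((2:ℝ)^(c':ℕ))^2 = (2:ℝ)^(N + 2*c') := by
      rw [pow_add, ← pow_mul]; ring
    have hlt : (2:ℝ)^(N+2*c') < (2:ℝ)^g := by
      apply pow_lt_pow_right₀ (by norm_num)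
      omega
    linarith
  have hg0 : 0 < g := by omega
  have hgR : (0:ℝ) < (g:ℝ) := by exact_mod_cast hg0
  set ψ : ℤ → ℤ := fun k => ⌊(k:ℝ)/(g:ℝ)⌋ with hψdef
  have hψ : ∀ k : ℤ, ψ k * g ≤ k ∧ k < ψ k * g + g := by
    intro k
    have h1 : ((ψ k : ℤ) : ℝ) ≤ (k:ℝ)/(g:ℝ) := Int.floor_le _
    have h2 : (k:ℝ)/(g:ℝ) < (ψ k : ℤ) + 1 := Int.lt_floor_add_one _
    constructor
    · have : ((ψ k : ℤ) : ℝ) * g ≤ k := by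
        calc ((ψ k : ℤ) : ℝ) * g ≤ ((k:ℝ)/(g:ℝ)) * g := by
              exact mul_le_mul_of_nonneg_right h1 (le_of_lt hgR)
          _ = k := div_mul_cancel₀ _ (ne_of_gt hgR)
      exact_mod_cast this
    · have : (k:ℝ) < (((ψ k : ℤ) : ℝ) + 1) * g := by
        calc (k:ℝ) = ((k:ℝ)/(g:ℝ)) * g := (div_mul_cancel₀ _ (ne_of_gt hgR)).symm
          _ < (((ψ k : ℤ) : ℝ) + 1) * g := mul_lt_mul_of_pos_right h2 hgR
      have h3 : (k:ℝ) < ((ψ k * g + g : ℤ) : ℝ) := by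
        rw [Int.cast_add, Int.cast_mul, Int.cast_natCast]; linarith
      exact_mod_cast h3
  have hfiber : ∀ q ∈ F.image ψ, (F.filter (fun k => ψ k = q)).card ≤ g := by
    intro q _
    have hsub : F.filter (fun k => ψ k = q) ⊆ Finset.Ico (q*g) (q*g+g) := by
      intro k hk
      obtain ⟨-, hq⟩ := Finset.mem_filter.mp hk
      have := hψ k
      rw [hq] at this
      exact Finset.mem_Ico.mpr ⟨this.1, this.2⟩
    calc (F.filter (fun k => ψ k = q)).card ≤ (Finset.Ico (q*g) (q*g+(g:ℤ))).card :=
          Finset.card_le_card hsub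
      _ = g := by rw [Int.card_Ico]; simp
  have hF1 : F.card ≤ g * (F.image ψ).card := Finset.card_le_mul_card_image F g hfiber
  set rep : ℤ → ℤ := fun q => if h : ∃ k ∈ F, ψ k = q then h.choose else 0 with hrepdef
  have hrep : ∀ q ∈ F.image ψ, rep q ∈ F ∧ ψ (rep q) = q := by
    intro q hq
    obtain ⟨k, hk, hkq⟩ := Finset.mem_image.mp hq
    have hex : ∃ k ∈ F, ψ k = q := ⟨k, hk, hkq⟩
    simp only [hrepdef, dif_pos hex]
    exact hex.choose_spec
  have hpartbound : ∀ r : ℤ, ((F.image ψ).filter (fun q => q % 2 = r)).card ≤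
      5*((2*N)*(2*N)) + 1 := by
    intro r
    set E : Finset ℤ := (F.image ψ).filter (fun q => q % 2 = r) with hE
    set GE : Finset ℤ := E.image rep with hGE
    have hGEsub : ∀ k ∈ GE, k ∈ F := by
      intro k hk
      obtain ⟨q, hq, rfl⟩ := Finset.mem_image.mp hk
      exact (hrep q (Finset.mem_filter.mp hq).1).1
    have hGEψ : ∀ k ∈ GE, ψ k % 2 = r ∧ (rep (ψ k) = k) := by
      intro k hk
      obtain ⟨q, hq, rfl⟩ := Finset.mem_image.mp hk
      have h1 := hrep q (Finset.mem_filter.mp hq).1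
      rw [h1.2]
      exact ⟨(Finset.mem_filter.mp hq).2, rfl⟩
    have hcardE : GE.card = E.card := by
      apply Finset.card_image_of_injOn
      intro q hq q' hq' heq
      have h1 := (hrep q (Finset.mem_filter.mp hq).1).2
      have h2 := (hrep q' (Finset.mem_filter.mp hq').1).2
      rw [← h1, ← h2, heq]
    have hsep : ∀ k ∈ GE, ∀ k' ∈ GE, k < k' → k + (g:ℤ) ≤ k' := by
      intro k hk k' hk' hlt
      have hψk := hGEψ k hk
      have hψk' := hGEψ k' hk'
      have hne : ψ k ≠ ψ k' := by
        intro hcontra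
        have : k = k' := by rw [← hψk.2, hcontra, hψk'.2]
        omega
      have hb1 := hψ k
      have hb2 := hψ k'
      have hltψ : ψ k < ψ k' := by
        by_contra hcon
        push_neg at hcon
        rcases lt_or_eq_of_le hcon with hlt2 | heq2
        · -- ψ k' < ψ k : k' < ψk' g + g ≤ ψk g ≤ k, contra
          have hmul : (ψ k' + 1) * (g:ℤ) ≤ ψ k * g :=
            mul_le_mul_of_nonneg_right (by omega) (by positivity)
          nlinarith [hb1.1, hb2.2]
        · exact hne heq2.symm
      have hpar : ψ k + 2 ≤ ψ k' := by
        have e1 := hψk.1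
        have e2 := hψk'.1
        omega
      have hmul : (ψ k + 2) * (g:ℤ) ≤ ψ k' * g :=
        mul_le_mul_of_nonneg_right hpar (by positivity)
      nlinarith [hb1.2, hb2.1]
    have := sep_bound N C hC p₁ p₂ h₁ h₂ a₁ a₂ ha₁ ha₂ g hg GE
      (fun k hk => hW k (hGEsub k hk)) hsep
    omega
  have hsplit : (F.image ψ).card ≤ 2 * (5*((2*N)*(2*N)) + 1) := by
    have hsub : F.image ψ ⊆ ((F.image ψ).filter (fun q => q % 2 = 0))
        ∪ ((F.image ψ).filter (fun q => q % 2 = 1)) := by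
      intro q hq
      rcases Int.emod_two_eq_zero_or_one q with h | h
      · exact Finset.mem_union_left _ (Finset.mem_filter.mpr ⟨hq, h⟩)
      · exact Finset.mem_union_right _ (Finset.mem_filter.mpr ⟨hq, h⟩)
    calc (F.image ψ).card ≤ (((F.image ψ).filter (fun q => q % 2 = 0))
        ∪ ((F.image ψ).filter (fun q => q % 2 = 1))).card := Finset.card_le_card hsub
      _ ≤ (((F.image ψ).filter (fun q => q % 2 = 0))).card
          + (((F.image ψ).filter (fun q => q % 2 = 1))).card := Finset.card_union_le _ _
      _ ≤ 2 * (5*((2*N)*(2*N)) + 1) := by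
          have := hpartbound 0
          have := hpartbound 1
          omega
  calc F.card ≤ g * (F.image ψ).card := hF1
    _ ≤ g * (2 * (5*((2*N)*(2*N)) + 1)) := Nat.mul_le_mul_left _ hsplit
    _ = (N + 2*c' + 1) * (2 * (5*((2*N)*(2*N)) + 1)) := by rw [hgdef]




/-- Two polynomials of bounded degree can simultaneously attain the comparability pattern
`(2^{a₁k}, 2^{-a₂k})` for only boundedly many integers `k`. -/
theorem stmt10 (N : ℕ) (C : ℝ) (hC : 1 ≤ C) :
    ∃ D : ℕ, ∀ (p₁ p₂ : Polynomial ℝ), p₁.natDegree ≤ N → p₂.natDegree ≤ N →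
      ∀ (a₁ a₂ : ℕ), 0 < a₁ → 0 < a₂ →
        {k : ℤ | ∃ t : ℝ,
          C⁻¹ * (2 : ℝ) ^ ((a₁ : ℤ) * k) ≤ |p₁.eval t| ∧
          |p₁.eval t| ≤ C * (2 : ℝ) ^ ((a₁ : ℤ) * k) ∧
          C⁻¹ * (2 : ℝ) ^ (-(a₂ : ℤ) * k) ≤ |p₂.eval t| ∧
          |p₂.eval t| ≤ C * (2 : ℝ) ^ (-(a₂ : ℤ) * k)}.Finite ∧
        {k : ℤ | ∃ t : ℝ,
          C⁻¹ * (2 : ℝ) ^ ((a₁ : ℤ) * k) ≤ |p₁.eval t| ∧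
          |p₁.eval t| ≤ C * (2 : ℝ) ^ ((a₁ : ℤ) * k) ∧
          C⁻¹ * (2 : ℝ) ^ (-(a₂ : ℤ) * k) ≤ |p₂.eval t| ∧
          |p₂.eval t| ≤ C * (2 : ℝ) ^ (-(a₂ : ℤ) * k)}.ncard ≤ D := by
  classical
  refine ⟨(N + 2*(⌈Real.logb 2 C⌉₊) + 1) * (2 * (5*((2*N)*(2*N)) + 1)), ?_⟩
  intro p₁ p₂ h₁ h₂ a₁ a₂ ha₁ ha₂
  set D : ℕ := (N + 2*(⌈Real.logb 2 C⌉₊) + 1) * (2 * (5*((2*N)*(2*N)) + 1)) with hD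
  set S : Set ℤ := {k : ℤ | ∃ t : ℝ,
      C⁻¹ * (2 : ℝ) ^ ((a₁ : ℤ) * k) ≤ |p₁.eval t| ∧
      |p₁.eval t| ≤ C * (2 : ℝ) ^ ((a₁ : ℤ) * k) ∧
      C⁻¹ * (2 : ℝ) ^ (-(a₂ : ℤ) * k) ≤ |p₂.eval t| ∧
      |p₂.eval t| ≤ C * (2 : ℝ) ^ (-(a₂ : ℤ) * k)} with hS
  have key : ∀ F : Finset ℤ, ↑F ⊆ S → F.card ≤ D := by
    intro F hF
    exact extract_bound N C hC p₁ p₂ h₁ h₂ a₁ a₂ ha₁ ha₂ F (fun k hk => hF hk)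
  have hfin : S.Finite := by
    by_contra hinf
    obtain ⟨t, hts, htc⟩ := Set.Infinite.exists_subset_card_eq hinf (D+1)
    have := key t hts
    omega
  refine ⟨hfin, ?_⟩
  rw [Set.ncard_eq_toFinset_card S hfin]
  exact key hfin.toFinset (by simp)
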